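/- For a DMC with minimum transition probability λ > 0, in any variable-length block code the posterior probability of each message at time n satisfies P(M = m | Y^n) ≥ (λ/(1−λ))^n / |M|, for every message m and every output sequence y^n of positive probability. -/
import Mathlib


open scoped BigOperators

noncomputable section

/-- Likelihood of an output history (stored in reverse chronological order: head is the most
recent output) given the message `m`, for a variable-length feedback code with encoder
`enc` (mapping the message and the past outputs to the next channel input) over the
channel `W`. -/
def lik {X Y Msg : Type*} (W : X → Y → ℝ) (enc : Msg → List Y → X) (m : Msg) :
    List Y → ℝ
  | [] => 1
  | y :: ys => lik W enc m ys * W (enc m ys) y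

/-- Posterior lower bound: for a DMC with minimum transition probability `λ > 0` and a
variable-length feedback code with uniformly distributed message, the posterior
probability of each message after observing any output history of positive probability is
at least `(λ/(1-λ))^n / |M|`. -/
lemma lik_nonneg {X Y Msg : Type*} (W : X → Y → ℝ) (enc : Msg → List Y → X)
    (hW : ∀ x y, 0 ≤ W x y) (m : Msg) : ∀ ys : List Y, 0 ≤ lik W enc m ys
  | [] => by simp [lik]
  | y :: ys => by
      simp only [lik]
      exact mul_nonneg (lik_nonneg W enc hW m ys) (hW _ _)

lemma lik_lower {X Y Msg : Type*} (W : X → Y → ℝ) (enc : Msg → List Y → X)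
    (lam : ℝ) (h0 : 0 ≤ lam) (hlow : ∀ x y, lam ≤ W x y) (m : Msg) :
    ∀ ys : List Y, lam ^ ys.length ≤ lik W enc m ys
  | [] => by simp [lik]
  | y :: ys => by
      simp only [lik, List.length_cons, pow_succ]
      exact mul_le_mul (lik_lower W enc lam h0 hlow m ys) (hlow _ _) h0
        (lik_nonneg W enc (fun x y => h0.trans (hlow x y)) m ys)

lemma lik_upper {X Y Msg : Type*} (W : X → Y → ℝ) (enc : Msg → List Y → X)
    (c : ℝ) (hW : ∀ x y, 0 ≤ W x y) (hub : ∀ x y, W x y ≤ c) (m : Msg) :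
    ∀ ys : List Y, lik W enc m ys ≤ c ^ ys.length
  | [] => by simp [lik]
  | y :: ys => by
      simp only [lik, List.length_cons, pow_succ]
      have hc : 0 ≤ c := (hW (enc m ys) y).trans (hub _ _)
      exact mul_le_mul (lik_upper W enc c hW hub m ys) (hub _ _) (hW _ _)
        (pow_nonneg hc _)

theorem posterior_lower_bound {X Y Msg : Type*} [Fintype X] [Fintype Y] [Fintype Msg]
    (W : X → Y → ℝ) (lam : ℝ) (hlam : 0 < lam)
    (hlow : ∀ x y, lam ≤ W x y) (hmin : ∃ x y, W x y = lam)
    (hrow : ∀ x, ∑ y, W x y = 1)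
    (enc : Msg → List Y → X) :
    ∀ (m : Msg) (ys : List Y), 0 < ∑ m', lik W enc m' ys →
      (lam / (1 - lam)) ^ ys.length / (Fintype.card Msg : ℝ)
        ≤ lik W enc m ys / ∑ m', lik W enc m' ys := by
  classical
  intro m ys hsum
  have hWnn : ∀ x y, 0 ≤ W x y := fun x y => hlam.le.trans (hlow x y)
  have : Nonempty Msg := ⟨m⟩
  have hcard : (0 : ℝ) < Fintype.card Msg := by exact_mod_cast Fintype.card_pos
  obtain ⟨x₀, y₀, hxy⟩ := hmin
  have hle1 : lam ≤ 1 := by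
    calc lam = W x₀ y₀ := hxy.symm
      _ ≤ ∑ y, W x₀ y := Finset.single_le_sum (fun y _ => hWnn x₀ y) (Finset.mem_univ y₀)
      _ = 1 := hrow x₀
  by_cases hl1 : lam < 1
  · -- there are at least two outputs
    have hY2 : 1 < Fintype.card Y := by
      by_contra h
      push_neg at h
      have h1 : Fintype.card Y = 1 := le_antisymm h (Fintype.card_pos_iff.mpr ⟨y₀⟩)
      obtain ⟨y₁, hy₁⟩ := Fintype.card_eq_one_iff.mp h1
      have : ∑ y, W x₀ y = W x₀ y₀ := by
        have : (Finset.univ : Finset Y) = {y₀} := by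
          ext z; simp [hy₁ z, hy₁ y₀]
        rw [this, Finset.sum_singleton]
      rw [hrow x₀, hxy] at this
      exact absurd this.symm (ne_of_lt hl1)
    have hub : ∀ x y, W x y ≤ 1 - lam := by
      intro x y
      obtain ⟨y', hy'⟩ := Fintype.exists_ne_of_one_lt_card hY2 y
      have hsub : ({y, y'} : Finset Y) ⊆ Finset.univ := Finset.subset_univ _
      have hpair : W x y + W x y' ≤ ∑ z, W x z := by
        rw [← Finset.sum_pair (Ne.symm hy')]
        exact Finset.sum_le_sum_of_subset_of_nonneg hsub (fun z _ _ => hWnn x z)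
      have := hrow x
      have hlow' := hlow x y'
      linarith
    have hlower : lam ^ ys.length ≤ lik W enc m ys :=
      lik_lower W enc lam hlam.le hlow m ys
    have hupper : ∀ m', lik W enc m' ys ≤ (1 - lam) ^ ys.length :=
      fun m' => lik_upper W enc (1 - lam) hWnn hub m' ys
    have hS : ∑ m', lik W enc m' ys ≤ (Fintype.card Msg : ℝ) * (1 - lam) ^ ys.length := by
      calc ∑ m', lik W enc m' ys ≤ ∑ _m' : Msg, (1 - lam) ^ ys.length :=
            Finset.sum_le_sum (fun m' _ => hupper m')
        _ = (Fintype.card Msg : ℝ) * (1 - lam) ^ ys.length := by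
            simp [Finset.sum_const, nsmul_eq_mul]
    have h1m : (0 : ℝ) < 1 - lam := by linarith
    rw [div_pow, div_div, div_le_div_iff₀ (by positivity) hsum]
    calc lam ^ ys.length * ∑ m', lik W enc m' ys
        ≤ lam ^ ys.length * ((Fintype.card Msg : ℝ) * (1 - lam) ^ ys.length) := by
          exact mul_le_mul_of_nonneg_left hS (by positivity)
      _ = lam ^ ys.length * ((1 - lam) ^ ys.length * (Fintype.card Msg : ℝ)) := by ring
      _ ≤ lik W enc m ys * ((1 - lam) ^ ys.length * (Fintype.card Msg : ℝ)) := by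
          exact mul_le_mul_of_nonneg_right hlower (by positivity)
  · -- lam = 1
    have heq : lam = 1 := le_antisymm hle1 (not_lt.mp hl1)
    cases ys with
    | nil =>
        simp only [lik, List.length_nil, pow_zero, Finset.sum_const, nsmul_eq_mul, mul_one]
        simp
    | cons y ys =>
        have : (lam / (1 - lam)) = 0 := by rw [heq]; simp
        rw [this]
        simp only [List.length_cons, zero_pow (Nat.succ_ne_zero _), zero_div]
        exact div_nonneg (lik_nonneg W enc hWnn m _) hsum.le

end
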